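/- Let Λ be a ring with a direct sum decomposition Λ = P ⊕ Q as right Λ-modules, and let f : B → P be a right minimal right (add Q)-approximation of P (so B ∈ add Q). Assume that every endomorphism of P that is not an automorphism factors through f, and that every endomorphism u of P with u ∘ f = 0 is zero. Set X := Λ[0] ⊕ P* in K(Mod Λ). Then: (i) the sequence Hom_{K(Mod Λ)}(P[0], X) → Hom_{K(Mod Λ)}(B[0], X) → Hom_{K(Mod Λ)}(P*, X), whose maps are precomposition with the chain map B[0] → P[0] induced by f and precomposition with π respectively, is exact at the middle term; (ii) every morphism φ : P* → X in K(Mod Λ) whose component P* → P* is not an isomorphism factors through π : P* → B[0], i.e. lies in the image of the second map. (This is the paper's description of Hom(P_i*, Λ ⊕ P_i*): the image of precomposition with the approximation map equals the radical, with simple cokernel.) -/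

import Mathlib

open CategoryTheory CategoryTheory.Limits

variable {Λ : Type} [Ring Λ]

/-- The category of right `Λ`-modules, as left modules over `Λᵐᵒᵖ`. -/
abbrev RMod (Λ : Type) [Ring Λ] := ModuleCat Λᵐᵒᵖ

/-- `Λ` as a right module over itself. -/
abbrev regR (Λ : Type) [Ring Λ] : RMod Λ := ModuleCat.of Λᵐᵒᵖ Λ

/-- The graded pieces of a two-term complex concentrated in degrees 0 and 1. -/
def tX (B P : RMod Λ) : ℤ → RMod Λ
  | 0 => B
  | 1 => P
  | _ => ModuleCat.of Λᵐᵒᵖ PUnit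

lemma tX0 (B P : RMod Λ) : tX B P 0 = B := rfl
lemma tX1 (B P : RMod Λ) : tX B P 1 = P := rfl

/-- The two-term cochain complex `P*` with `B` in degree 0, `P` in degree 1,
differential `f`, and zeros elsewhere. -/
def twoTerm {B P : RMod Λ} (f : B ⟶ P) : CochainComplex (RMod Λ) ℤ where
  X := tX B P
  d i j := if h : i = 0 ∧ j = 1 then
      (eqToHom (by rw [h.1, tX0]) : tX B P i ⟶ B) ≫ f ≫
        (eqToHom (by rw [h.2, tX1]) : P ⟶ tX B P j)
    else 0
  shape i j hij := by
    try dsimp only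
    rw [dif_neg]
    rintro ⟨rfl, rfl⟩
    exact hij rfl
  d_comp_d' i j k _ _ := by
    try dsimp only
    by_cases h : i = 0 ∧ j = 1
    · obtain ⟨rfl, rfl⟩ := h
      rw [dif_neg (by rintro ⟨h1, -⟩; exact one_ne_zero h1 : ¬((1:ℤ) = 0 ∧ k = 1)), comp_zero]
    · rw [dif_neg h, zero_comp]

/-- The complex `M[0]`, with `M` concentrated in degree 0. -/
def sgl (M : RMod Λ) : CochainComplex (RMod Λ) ℤ := twoTerm (0 : M ⟶ ModuleCat.of Λᵐᵒᵖ PUnit)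

/-- The homotopy category `K(Mod Λ)` of cochain complexes of right `Λ`-modules. -/
abbrev KMod (Λ : Type) [Ring Λ] := HomotopyCategory (RMod Λ) (ComplexShape.up ℤ)

/-- The quotient functor from complexes to the homotopy category. -/
abbrev Kq : CochainComplex (RMod Λ) ℤ ⥤ KMod Λ := HomotopyCategory.quotient _ _

/-- The chain map `π : P* ⟶ B[0]` given by the identity of `B` in degree 0. -/
def projB {B P : RMod Λ} (f : B ⟶ P) : twoTerm f ⟶ sgl B where
  f i := if h : i = 0 then eqToHom (by rw [h]; rfl) else 0
  comm' i j hij := by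
    try dsimp only
    by_cases h : i = 0
    · subst h
      obtain rfl : j = 1 := by simpa using hij.symm
      simp [twoTerm, sgl]
      all_goals first | rfl | exact comp_zero.symm | exact zero_comp.symm | (erw [comp_zero]) | (erw [zero_comp])
    · rw [dif_neg h, zero_comp]
      have hn : ¬(i = 0 ∧ j = 1) := fun hc => h hc.1
      simp [twoTerm, dif_neg hn]
      all_goals first | rfl | exact comp_zero.symm | exact zero_comp.symm | (erw [comp_zero]) | (erw [zero_comp])

/-- The chain map `B[0] ⟶ P[0]` induced by `f : B ⟶ P`. -/
def sglMap {B P : RMod Λ} (f : B ⟶ P) : sgl B ⟶ sgl P where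
  f i := if h : i = 0 then eqToHom (by rw [h]; rfl) ≫ f ≫ eqToHom (by rw [h]; rfl) else 0
  comm' i j hij := by
    try dsimp only
    by_cases h : i = 0
    · subst h
      obtain rfl : j = 1 := by simpa using hij.symm
      simp [sgl, twoTerm]
      all_goals first | rfl | exact comp_zero.symm | exact zero_comp.symm | (erw [comp_zero]) | (erw [zero_comp])
    · rw [dif_neg h, zero_comp]
      have hn : ¬(i = 0 ∧ j = 1) := fun hc => h hc.1
      simp [sgl, twoTerm, dif_neg hn]
      all_goals first | rfl | exact comp_zero.symm | exact zero_comp.symm | (erw [comp_zero]) | (erw [zero_comp])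

/-- `M` is in `add X`: it is a direct summand of a finite direct sum of copies of `X`. -/
def memAdd (X M : RMod Λ) : Prop :=
  ∃ (t : ℕ) (s : M ⟶ ⨁ (fun _ : Fin t => X)) (r : (⨁ (fun _ : Fin t => X)) ⟶ M),
    s ≫ r = 𝟙 M

/-- `f : B ⟶ P` is a right `add X`-approximation of `P`. -/
def IsRightApprox (X : RMod Λ) {B P : RMod Λ} (f : B ⟶ P) : Prop :=
  memAdd X B ∧ ∀ B' : RMod Λ, memAdd X B' → ∀ g : B' ⟶ P, ∃ h : B' ⟶ B, h ≫ f = g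

/-- `f : B ⟶ P` is right minimal. -/
def RightMinimal {B P : RMod Λ} (f : B ⟶ P) : Prop :=
  ∀ h : B ⟶ B, h ≫ f = f → IsIso h

example {B P : RMod Λ} (f : B ⟶ P) : (twoTerm f).d 0 1 = f := rfl
lemma tX_eq (B P : RMod Λ) (i : ℤ) (h0 : i ≠ 0) (h1 : i ≠ 1) :
    tX B P i = ModuleCat.of Λᵐᵒᵖ PUnit := by
  unfold tX
  split
  · exact absurd rfl h0
  · exact absurd rfl h1
  · rfl
lemma sub_tgt (M N : RMod Λ) (h : Subsingleton N) : Subsingleton (M ⟶ N) := by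
  constructor; intro a b; ext x; exact Subsingleton.elim _ _
lemma sub_src (M N : RMod Λ) (h : Subsingleton M) : Subsingleton (M ⟶ N) := by
  constructor; intro a b; ext x
  rw [Subsingleton.elim x 0, map_zero, map_zero]
lemma tX_sub (B P : RMod Λ) (i : ℤ) (h0 : i ≠ 0) (h1 : i ≠ 1) : Subsingleton (tX B P i) := by
  rw [tX_eq B P i h0 h1]; exact inferInstanceAs (Subsingleton PUnit)
lemma tX_sub1 (M : RMod Λ) : Subsingleton (tX M (ModuleCat.of Λᵐᵒᵖ PUnit) 1) :=
  inferInstanceAs (Subsingleton PUnit)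

-- component tests
example {B P : RMod Λ} (f : B ⟶ P) : (projB f).f 0 = (𝟙 B : B ⟶ B) := rfl
example {B P : RMod Λ} (f : B ⟶ P) : (projB f).f 1 = 0 := rfl
example {B P : RMod Λ} (f : B ⟶ P) : (sglMap f).f 0 = (f : B ⟶ P) := rfl

/-- map between two-term complexes from components -/
def tmap {B P B' P' : RMod Λ} (f : B ⟶ P) (f' : B' ⟶ P') (a : B ⟶ B') (c : P ⟶ P')
    (hcomm : a ≫ f' = f ≫ c) : twoTerm f ⟶ twoTerm f' where
  f i := if h0 : i = 0 then
      (eqToHom (by rw [h0]; rfl) : tX B P i ⟶ B) ≫ a ≫ (eqToHom (by rw [h0]; rfl) : B' ⟶ tX B' P' i)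
    else if h1 : i = 1 then
      (eqToHom (by rw [h1]; rfl) : tX B P i ⟶ P) ≫ c ≫ (eqToHom (by rw [h1]; rfl) : P' ⟶ tX B' P' i)
    else 0
  comm' i j hij := by
    try dsimp only
    by_cases h : i = 0
    · subst h
      obtain rfl : j = 1 := by simpa using hij.symm
      simp [twoTerm]; exact hcomm
    · rw [dif_neg h]
      have hn : ¬(i = 0 ∧ j = 1) := fun hc => h hc.1
      by_cases h1 : i = 1
      · subst h1
        obtain rfl : j = 2 := by simpa using hij.symm
        simp [twoTerm]; exact zero_comp.symm
      · rw [dif_neg h1, zero_comp]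
        simp [twoTerm, dif_neg hn]; rfl

example {B P B' P' : RMod Λ} (f : B ⟶ P) (f' : B' ⟶ P') (a : B ⟶ B') (c : P ⟶ P')
    (h : a ≫ f' = f ≫ c) : (tmap f f' a c h).f 0 = a := rfl
example {B P B' P' : RMod Λ} (f : B ⟶ P) (f' : B' ⟶ P') (a : B ⟶ B') (c : P ⟶ P')
    (h : a ≫ f' = f ≫ c) : (tmap f f' a c h).f 1 = c := rfl

lemma text {B P B' P' : RMod Λ} {f : B ⟶ P} {f' : B' ⟶ P'} {φ ψ : twoTerm f ⟶ twoTerm f'}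
    (h0 : φ.f 0 = ψ.f 0) (h1 : φ.f 1 = ψ.f 1) : φ = ψ := by
  apply HomologicalComplex.Hom.ext
  funext i
  by_cases hi0 : i = 0
  · subst hi0; exact h0
  by_cases hi1 : i = 1
  · subst hi1; exact h1
  · exact (sub_tgt (Λ := Λ) ((twoTerm f).X i) ((twoTerm f').X i)
      (tX_sub B' P' i hi0 hi1)).allEq _ _

lemma tcomm {B P B' P' : RMod Λ} {f : B ⟶ P} {f' : B' ⟶ P'} (φ : twoTerm f ⟶ twoTerm f') :
    φ.f 0 ≫ f' = f ≫ φ.f 1 := by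
  have := φ.comm' 0 1 rfl
  simp [twoTerm] at this; exact this

/-- Build a homotopy between two-term maps from a single component `s : P ⟶ B'`. -/
def thomotopy {B P B' P' : RMod Λ} {f : B ⟶ P} {f' : B' ⟶ P'} (φ ψ : twoTerm f ⟶ twoTerm f')
    (s : P ⟶ B')
    (h0 : φ.f 0 = ((f ≫ s + (show B ⟶ B' from ψ.f 0) : B ⟶ B') : tX B P 0 ⟶ tX B' P' 0))
    (h1 : φ.f 1 = ((s ≫ f' + (show P ⟶ P' from ψ.f 1) : P ⟶ P') : tX B P 1 ⟶ tX B' P' 1)) : Homotopy φ ψ where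
  hom i j := if h : i = 1 ∧ j = 0 then
      (eqToHom (by rw [h.1]; rfl) : (twoTerm f).X i ⟶ P) ≫ s ≫
        (eqToHom (by rw [h.2]; rfl) : B' ⟶ (twoTerm f').X j)
    else 0
  zero i j hr := by
    try dsimp only
    rw [dif_neg]
    rintro ⟨rfl, rfl⟩
    exact hr rfl
  comm i := by
    by_cases hi0 : i = 0
    · subst hi0
      rw [dNext_eq _ (show (ComplexShape.up ℤ).Rel 0 1 by simp),
        prevD_eq _ (show (ComplexShape.up ℤ).Rel (-1) 0 by simp)]
      have hn : ¬((-1:ℤ) = 0 ∧ (0:ℤ) = 1) := by simp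
      have hd : (twoTerm f').d (-1) 0 = 0 := by
        simp only [twoTerm, dif_neg hn]; rfl
      rw [hd, comp_zero, add_zero]
      simp [twoTerm]; exact h0
    · by_cases hi1 : i = 1
      · subst hi1
        rw [dNext_eq _ (show (ComplexShape.up ℤ).Rel 1 2 by simp),
          prevD_eq _ (show (ComplexShape.up ℤ).Rel 0 1 by simp)]
        have hn : ¬((1:ℤ) = 0 ∧ (2:ℤ) = 1) := by simp
        have hd : (twoTerm f).d 1 2 = 0 := by
          simp only [twoTerm, dif_neg hn]; rfl
        rw [hd, zero_comp, zero_add]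
        simp [twoTerm]; exact h1
      · rw [dNext_eq _ (show (ComplexShape.up ℤ).Rel i (i+1) by simp),
          prevD_eq _ (show (ComplexShape.up ℤ).Rel (i-1) i by simp)]
        have hd : (twoTerm f).d i (i+1) = 0 := by
          have hn : ¬ (i = 0 ∧ i + 1 = 1) := fun hc => hi0 hc.1
          simp only [twoTerm, dif_neg hn]; rfl
        have hd' : (twoTerm f').d (i-1) i = 0 := by
          have hn : ¬ ((i - 1 : ℤ) = 0 ∧ i = 1) := fun hc => hi1 hc.2
          simp only [twoTerm, dif_neg hn]; rfl
        rw [hd, hd', zero_comp, comp_zero, zero_add, zero_add]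
        exact (sub_tgt (Λ := Λ) ((twoTerm f).X i) ((twoTerm f').X i)
          (tX_sub B' P' i hi0 hi1)).allEq _ _

/-- Extract `s` from an equality in the homotopy category. -/
lemma textract {B P B' P' : RMod Λ} {f : B ⟶ P} {f' : B' ⟶ P'} {φ ψ : twoTerm f ⟶ twoTerm f'}
    (h : Kq.map φ = Kq.map ψ) :
    ∃ s : P ⟶ B', φ.f 0 = ((f ≫ s + (show B ⟶ B' from ψ.f 0) : B ⟶ B') : tX B P 0 ⟶ tX B' P' 0)
      ∧ φ.f 1 = ((s ≫ f' + (show P ⟶ P' from ψ.f 1) : P ⟶ P') : tX B P 1 ⟶ tX B' P' 1) := by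
  have H := HomotopyCategory.homotopyOfEq φ ψ h
  refine ⟨H.hom 1 0, ?_, ?_⟩
  · have := H.comm 0
    rw [dNext_eq _ (show (ComplexShape.up ℤ).Rel 0 1 by simp),
      prevD_eq _ (show (ComplexShape.up ℤ).Rel (-1) 0 by simp)] at this
    have hn : ¬((-1:ℤ) = 0 ∧ (0:ℤ) = 1) := by simp
    have hd : (twoTerm f').d (-1) 0 = 0 := by
      simp only [twoTerm, dif_neg hn]; rfl
    rw [hd, comp_zero, add_zero] at this
    simp [twoTerm] at this; exact this
  · have := H.comm 1
    rw [dNext_eq _ (show (ComplexShape.up ℤ).Rel 1 2 by simp),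
      prevD_eq _ (show (ComplexShape.up ℤ).Rel 0 1 by simp)] at this
    have hn : ¬((1:ℤ) = 0 ∧ (2:ℤ) = 1) := by simp
    have hd : (twoTerm f).d 1 2 = 0 := by
      simp only [twoTerm, dif_neg hn]; rfl
    rw [hd, zero_comp, zero_add] at this
    simp [twoTerm] at this; exact this

lemma sglMap_f0 {B P : RMod Λ} (f : B ⟶ P) : (sglMap f).f 0 = (f : B ⟶ P) := rfl
lemma sglMap_f1 {B P : RMod Λ} (f : B ⟶ P) : (sglMap f).f 1 = 0 := rfl
lemma projB_f1 {B P : RMod Λ} (f : B ⟶ P) : (projB f).f 1 = 0 := rfl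
lemma projB_comp_f0 {B P T : RMod Λ} (f : B ⟶ P) (x : (sgl B).X 0 ⟶ T) :
    ((projB f).f 0 ≫ x : (twoTerm f).X 0 ⟶ T) = (x : B ⟶ T) := by
  have : (projB f).f 0 = (𝟙 B : (twoTerm f).X 0 ⟶ (sgl B).X 0) := rfl
  rw [this]
  exact Category.id_comp (x : B ⟶ T)
lemma tmap_f0 {B P B' P' : RMod Λ} (f : B ⟶ P) (f' : B' ⟶ P') (a : B ⟶ B') (c : P ⟶ P')
    (h : a ≫ f' = f ≫ c) : (tmap f f' a c h).f 0 = a := rfl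
lemma tmap_f1 {B P B' P' : RMod Λ} (f : B ⟶ P) (f' : B' ⟶ P') (a : B ⟶ B') (c : P ⟶ P')
    (h : a ≫ f' = f ≫ c) : (tmap f f' a c h).f 1 = c := rfl

lemma teq {B P B' P' : RMod Λ} {f : B ⟶ P} {f' : B' ⟶ P'} (φ ψ : twoTerm f ⟶ twoTerm f')
    (s : P ⟶ B')
    (h0 : φ.f 0 = ((f ≫ s + (show B ⟶ B' from ψ.f 0) : B ⟶ B') : tX B P 0 ⟶ tX B' P' 0))
    (h1 : φ.f 1 = ((s ≫ f' + (show P ⟶ P' from ψ.f 1) : P ⟶ P') : tX B P 1 ⟶ tX B' P' 1)) :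
    Kq.map φ = Kq.map ψ :=
  HomotopyCategory.eq_of_homotopy _ _ (thomotopy φ ψ s h0 h1)

/-- `π ≫ f[0]` is null-homotopic. -/
lemma pi_sglMap_zero {B P : RMod Λ} (f : B ⟶ P) :
    Kq.map (projB f ≫ sglMap f) = 0 := by
  have h := teq (f := f) (f' := (0 : P ⟶ ModuleCat.of Λᵐᵒᵖ PUnit))
    (projB f ≫ sglMap f) 0 (𝟙 P) ?_ ?_
  · exact h.trans (Kq.map_zero _ _)
  · show (projB f).f 0 ≫ (sglMap f).f 0 = _
    rw [projB_comp_f0, sglMap_f0]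
    show f = f ≫ 𝟙 P + 0
    simp
  · exact (sub_tgt (Λ := Λ) _ _ (tX_sub1 P)).allEq _ _

lemma iso_sub {M N : RMod Λ} (hM : Subsingleton M) (hN : Subsingleton N) (g : M ⟶ N) :
    IsIso g := by
  refine ⟨0, ?_, ?_⟩
  · exact (sub_tgt M M hM).allEq _ _
  · exact (sub_tgt N N hN).allEq _ _

lemma tIso {B P B' P' : RMod Λ} {f : B ⟶ P} {f' : B' ⟶ P'} (φ : twoTerm f ⟶ twoTerm f')
    (h0 : IsIso (φ.f 0)) (h1 : IsIso (φ.f 1)) : IsIso φ := by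
  have : ∀ n, IsIso (φ.f n) := by
    intro n
    by_cases hn0 : n = 0
    · subst hn0; exact h0
    by_cases hn1 : n = 1
    · subst hn1; exact h1
    · exact iso_sub (tX_sub B P n hn0 hn1) (tX_sub B' P' n hn0 hn1) _
  exact HomologicalComplex.Hom.isIso_of_components φ

lemma isIso_of_comp {C : Type*} [Category C] {X Y : C} (u : X ⟶ Y) (v : Y ⟶ X)
    (h1 : IsIso (u ≫ v)) (h2 : IsIso (v ≫ u)) : IsIso u := by
  have m : IsSplitMono u :=
    IsSplitMono.mk' ⟨v ≫ inv (u ≫ v), by rw [← Category.assoc, IsIso.hom_inv_id]⟩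
  have e : IsSplitEpi u :=
    IsSplitEpi.mk' ⟨inv (v ≫ u) ≫ v, by rw [Category.assoc, IsIso.inv_hom_id]⟩
  exact isIso_of_mono_of_isSplitEpi u

lemma neg_iso {M : RMod Λ} (c : M ⟶ M) (h : IsIso (-c)) : IsIso c := by
  refine ⟨-(inv (-c)), ?_, ?_⟩
  · rw [Preadditive.comp_neg, ← Preadditive.neg_comp, IsIso.hom_inv_id]
  · rw [Preadditive.neg_comp, ← Preadditive.comp_neg, IsIso.inv_hom_id]

lemma map_sum_aux {C D : Type*} [Category C] [Preadditive C] [Category D] [Preadditive D]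
    (F : C ⥤ D) [F.Additive] {X Y W1 W2 Z : C} (g : X ⟶ Y) (t1 : Y ⟶ W1) (i1 : W1 ⟶ Z)
    (t2 : Y ⟶ W2) (i2 : W2 ⟶ Z) (G : X ⟶ Z) (G1 : X ⟶ W1) (G2 : X ⟶ W2)
    (h1 : F.map g ≫ F.map t1 = F.map G1) (h2 : F.map g ≫ F.map t2 = F.map G2)
    (h : G1 ≫ i1 + G2 ≫ i2 = G) :
    F.map g ≫ (F.map t1 ≫ F.map i1 + F.map t2 ≫ F.map i2) = F.map G := by
  rw [Preadditive.comp_add, ← Category.assoc, ← Category.assoc, h1, h2, ← F.map_comp,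
    ← F.map_comp, ← F.map_add, h]

/-- Let `Λ = P ⊕ Q` as right `Λ`-modules, `f : B ⟶ P` a right minimal right
`add Q`-approximation of `P`; assume every non-automorphism endomorphism of `P` factors through
`f` and every endomorphism `u` of `P` with `u ∘ f = 0` is zero. Set `X := Λ[0] ⊕ P*` in
`K(Mod Λ)`. Then:
(i) the sequence `Hom(P[0], X) ⟶ Hom(B[0], X) ⟶ Hom(P*, X)`, given by precomposition with the
chain map `B[0] ⟶ P[0]` induced by `f` and with `π : P* ⟶ B[0]`, is exact at the middle term;
(ii) every `φ : P* ⟶ X` whose component `P* ⟶ P*` is not an isomorphism factors through `π`. -/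
theorem hom_from_Pstar_radical_description
    (Λ : Type) [Ring Λ] (P Q B : RMod Λ)
    (decomp : regR Λ ≅ P ⊞ Q)
    (f : B ⟶ P) (happrox : IsRightApprox Q f) (hmin : RightMinimal f)
    (hfact : ∀ β : P ⟶ P, ¬ IsIso β → ∃ δ : P ⟶ B, δ ≫ f = β)
    (hvanish : ∀ u : P ⟶ P, f ≫ u = 0 → u = 0) :
    (∀ g : (Kq).obj (sgl B) ⟶ (Kq).obj (sgl (regR Λ) ⊞ twoTerm f),
      ((Kq).map (projB f) ≫ g = 0 ↔
        ∃ h : (Kq).obj (sgl P) ⟶ (Kq).obj (sgl (regR Λ) ⊞ twoTerm f),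
          (Kq).map (sglMap f) ≫ h = g)) ∧
    (∀ φ : (Kq).obj (twoTerm f) ⟶ (Kq).obj (sgl (regR Λ) ⊞ twoTerm f),
      ¬ IsIso (φ ≫ (Kq).map (biprod.snd : sgl (regR Λ) ⊞ twoTerm f ⟶ twoTerm f)) →
      ∃ ψ : (Kq).obj (sgl B) ⟶ (Kq).obj (sgl (regR Λ) ⊞ twoTerm f),
        φ = (Kq).map (projB f) ≫ ψ) := by
  
  constructor
  · intro g
    constructor
    · intro hg
      obtain ⟨G, rfl⟩ := (Kq (Λ := Λ)).map_surjective g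
      have hg0 : Kq.map (projB f ≫ G) = 0 := by rw [Functor.map_comp]; exact hg
      -- first component
      have e1 : Kq.map (projB f ≫ (G ≫ biprod.fst)) =
          Kq.map (0 : twoTerm f ⟶ sgl (regR Λ)) := by
        rw [Functor.map_zero,
          show projB f ≫ (G ≫ biprod.fst) = (projB f ≫ G) ≫ biprod.fst by simp,
          Functor.map_comp, hg0, zero_comp]
      obtain ⟨s, hs0, -⟩ := textract (f := f)
        (f' := (0 : regR Λ ⟶ ModuleCat.of Λᵐᵒᵖ PUnit)) e1
      rw [show (projB f ≫ (G ≫ biprod.fst)).f 0 = (projB f).f 0 ≫ (G ≫ biprod.fst).f 0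
          from rfl, projB_comp_f0] at hs0
      have hG1 : ((G ≫ biprod.fst).f 0 : B ⟶ regR Λ) = f ≫ s := by
        have h2 : ((G ≫ biprod.fst).f 0 : B ⟶ regR Λ) = f ≫ s + (0 : B ⟶ regR Λ) := hs0
        rw [add_zero] at h2; exact h2
      -- second component
      have e2 : Kq.map (projB f ≫ (G ≫ biprod.snd)) =
          Kq.map (0 : twoTerm f ⟶ twoTerm f) := by
        rw [Functor.map_zero,
          show projB f ≫ (G ≫ biprod.snd) = (projB f ≫ G) ≫ biprod.snd by simp,
          Functor.map_comp, hg0, zero_comp]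
      obtain ⟨s₂, hs0₂, hs1₂⟩ := textract (f := f) (f' := f) e2
      rw [show (projB f ≫ (G ≫ biprod.snd)).f 0 = (projB f).f 0 ≫ (G ≫ biprod.snd).f 0
          from rfl, projB_comp_f0] at hs0₂
      have hG2 : ((G ≫ biprod.snd).f 0 : B ⟶ B) = f ≫ s₂ := by
        have h2 : ((G ≫ biprod.snd).f 0 : B ⟶ B) = f ≫ s₂ + (0 : B ⟶ B) := hs0₂
        rw [add_zero] at h2; exact h2
      have hs2f : s₂ ≫ f = 0 := by
        have : (projB f ≫ (G ≫ biprod.snd)).f 1 =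
            (projB f).f 1 ≫ (G ≫ biprod.snd).f 1 := rfl
        rw [this, projB_f1, zero_comp] at hs1₂
        have h2 : (0 : P ⟶ P) = s₂ ≫ f + (0 : P ⟶ P) := hs1₂
        rw [add_zero] at h2; exact h2.symm
      -- build lifts
      refine ⟨Kq.map (X := sgl P) (Y := sgl (regR Λ)) (tmap (0 : P ⟶ ModuleCat.of Λᵐᵒᵖ PUnit)
          (0 : regR Λ ⟶ ModuleCat.of Λᵐᵒᵖ PUnit) s 0 (by simp)) ≫ Kq.map biprod.inl +
        Kq.map (X := sgl P) (tmap (0 : P ⟶ ModuleCat.of Λᵐᵒᵖ PUnit) f s₂ 0 (by simp [hs2f])) ≫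
          Kq.map biprod.inr, ?_⟩
      have c1 : sglMap f ≫ tmap (0 : P ⟶ ModuleCat.of Λᵐᵒᵖ PUnit)
          (0 : regR Λ ⟶ ModuleCat.of Λᵐᵒᵖ PUnit) s 0 (by simp) = G ≫ biprod.fst := by
        apply text
        · show (sglMap f).f 0 ≫ s = _
          rw [sglMap_f0]; exact hG1.symm
        · exact (sub_tgt (Λ := Λ) _ _ (tX_sub1 (regR Λ))).allEq _ _
      have c2 : sglMap f ≫ tmap (0 : P ⟶ ModuleCat.of Λᵐᵒᵖ PUnit) f s₂ 0 (by simp [hs2f]) =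
          G ≫ biprod.snd := by
        apply text
        · show (sglMap f).f 0 ≫ s₂ = _
          rw [sglMap_f0]; exact hG2.symm
        · exact (sub_src (Λ := Λ) _ _ (tX_sub1 B)).allEq _ _
      have htot : (G ≫ biprod.fst) ≫ biprod.inl + (G ≫ biprod.snd) ≫ biprod.inr = G := by
        rw [Category.assoc, Category.assoc, ← Preadditive.comp_add, biprod.total,
          Category.comp_id]
      exact map_sum_aux Kq _ _ _ _ _ _ _ _
        ((Kq.map_comp _ _).symm.trans (congrArg (fun x => Kq.map x) c1))
        ((Kq.map_comp _ _).symm.trans (congrArg (fun x => Kq.map x) c2)) htot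
    · rintro ⟨h, rfl⟩
      rw [← Category.assoc, ← Functor.map_comp, pi_sglMap_zero, zero_comp]
  · intro φ hniso
    obtain ⟨Φ, rfl⟩ := (Kq (Λ := Λ)).map_surjective φ
    have hac : ((Φ ≫ biprod.snd).f 0 : B ⟶ B) ≫ f =
        f ≫ ((Φ ≫ biprod.snd).f 1 : P ⟶ P) := tcomm _
    have hc : ¬ IsIso ((Φ ≫ biprod.snd).f 1 : P ⟶ P) := by
      intro hci
      apply hniso
      rw [← Functor.map_comp]
      obtain ⟨b, hb⟩ := happrox.2 B happrox.1 (f ≫ inv ((Φ ≫ biprod.snd).f 1 : P ⟶ P) (I := hci))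
      have h1 : ((Φ ≫ biprod.snd).f 0 ≫ b : B ⟶ B) ≫ f = f := by
        erw [Category.assoc, hb, ← Category.assoc, hac, Category.assoc, IsIso.hom_inv_id,
          Category.comp_id]
      have hib : IsIso ((Φ ≫ biprod.snd).f 0 ≫ b : B ⟶ B) := hmin _ h1
      have h2 : (b ≫ (Φ ≫ biprod.snd).f 0 : B ⟶ B) ≫ f = f := by
        erw [Category.assoc, hac, ← Category.assoc, hb, Category.assoc, IsIso.inv_hom_id,
          Category.comp_id]
      have hib2 : IsIso (b ≫ (Φ ≫ biprod.snd).f 0 : B ⟶ B) := hmin _ h2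
      have i1 : IsIso ((Φ ≫ biprod.snd) ≫ tmap f f b _ hb) := by
        apply tIso
        · exact hib
        · show IsIso (((Φ ≫ biprod.snd).f 1 : P ⟶ P) ≫ inv ((Φ ≫ biprod.snd).f 1 : P ⟶ P))
          rw [IsIso.hom_inv_id]; infer_instance
      have i2 : IsIso (tmap f f b _ hb ≫ (Φ ≫ biprod.snd)) := by
        apply tIso
        · exact hib2
        · show IsIso ((inv ((Φ ≫ biprod.snd).f 1 : P ⟶ P)) ≫ ((Φ ≫ biprod.snd).f 1 : P ⟶ P))
          rw [IsIso.inv_hom_id]; infer_instance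
      have j1 : IsIso (Kq.map (Φ ≫ biprod.snd) ≫ Kq.map (tmap f f b _ hb)) := by
        rw [← Functor.map_comp]; haveI := i1; infer_instance
      have j2 : IsIso (Kq.map (tmap f f b _ hb) ≫ Kq.map (Φ ≫ biprod.snd)) := by
        rw [← Functor.map_comp]; haveI := i2; infer_instance
      exact isIso_of_comp _ _ j1 j2
    obtain ⟨a, ha⟩ : ∃ x : B ⟶ B, x = (Φ ≫ biprod.snd).f 0 := ⟨_, rfl⟩
    obtain ⟨c, hcc⟩ : ∃ x : P ⟶ P, x = (Φ ≫ biprod.snd).f 1 := ⟨_, rfl⟩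
    rw [← hcc] at hc
    have hac' : a ≫ f = f ≫ c := by rw [ha, hcc]; exact hac
    obtain ⟨δ, hδ⟩ := hfact (-c) (fun hneg => hc (neg_iso _ hneg))
    have hsum : (f ≫ δ + a) ≫ f = 0 := by
      rw [Preadditive.add_comp, Category.assoc, hδ, hac', Preadditive.comp_neg, neg_add_cancel]
    have hcomm2 : (f ≫ δ + a) ≫ f =
        (0 : B ⟶ ModuleCat.of Λᵐᵒᵖ PUnit) ≫ (0 : ModuleCat.of Λᵐᵒᵖ PUnit ⟶ P) := by
      rw [hsum, zero_comp]
    have hψ0 : ((projB f ≫ tmap (0 : B ⟶ ModuleCat.of Λᵐᵒᵖ PUnit) f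
        (f ≫ δ + a) 0 hcomm2).f 0 : B ⟶ B) = f ≫ δ + a := by
      show (projB f).f 0 ≫ _ = _
      rw [projB_comp_f0]
      rfl
    have hψ1 : ((projB f ≫ tmap (0 : B ⟶ ModuleCat.of Λᵐᵒᵖ PUnit) f
        (f ≫ δ + a) 0 hcomm2).f 1 : P ⟶ P) = 0 := by
      show (projB f).f 1 ≫ _ = _
      rw [projB_f1, zero_comp]
    have keq2 : Kq.map (projB f ≫ tmap (0 : B ⟶ ModuleCat.of Λᵐᵒᵖ PUnit) f
        (f ≫ δ + a) 0 hcomm2) = Kq.map (Φ ≫ biprod.snd) := by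
      refine teq _ _ δ ?_ ?_
      · rw [hψ0, ← ha]
      · rw [hψ1, hδ, ← hcc]
        exact (neg_add_cancel c).symm
    have ceq1 : projB f ≫ tmap (0 : B ⟶ ModuleCat.of Λᵐᵒᵖ PUnit)
        (0 : regR Λ ⟶ ModuleCat.of Λᵐᵒᵖ PUnit) ((Φ ≫ biprod.fst).f 0 : B ⟶ regR Λ) 0
        ((sub_tgt (Λ := Λ) _ _ (inferInstanceAs (Subsingleton PUnit))).allEq _ _) = Φ ≫ biprod.fst := by
      apply text
      · show (projB f).f 0 ≫ _ = _
        rw [projB_comp_f0]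
        rfl
      · exact (sub_tgt (Λ := Λ) _ _ (tX_sub1 (regR Λ))).allEq _ _
    refine ⟨Kq.map (X := sgl B) (Y := sgl (regR Λ)) (tmap (0 : B ⟶ ModuleCat.of Λᵐᵒᵖ PUnit)
        (0 : regR Λ ⟶ ModuleCat.of Λᵐᵒᵖ PUnit) ((Φ ≫ biprod.fst).f 0 : B ⟶ regR Λ) 0
        ((sub_tgt (Λ := Λ) _ _ (inferInstanceAs (Subsingleton PUnit))).allEq _ _)) ≫ Kq.map biprod.inl +
      Kq.map (X := sgl B) (tmap (0 : B ⟶ ModuleCat.of Λᵐᵒᵖ PUnit) f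
        (f ≫ δ + a) 0 hcomm2) ≫ Kq.map biprod.inr, ?_⟩
    have htot : (Φ ≫ biprod.fst) ≫ biprod.inl + (Φ ≫ biprod.snd) ≫ biprod.inr = Φ := by
      rw [Category.assoc, Category.assoc, ← Preadditive.comp_add, biprod.total,
        Category.comp_id]
    have k1 : Kq.map (projB f) ≫ Kq.map (X := sgl B) (Y := sgl (regR Λ)) (tmap (0 : B ⟶ ModuleCat.of Λᵐᵒᵖ PUnit)
        (0 : regR Λ ⟶ ModuleCat.of Λᵐᵒᵖ PUnit) ((Φ ≫ biprod.fst).f 0 : B ⟶ regR Λ) 0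
        ((sub_tgt (Λ := Λ) _ _ (inferInstanceAs (Subsingleton PUnit))).allEq _ _)) = Kq.map (Φ ≫ biprod.fst) := by
      exact (Kq.map_comp _ _).symm.trans (congrArg (fun x => Kq.map x) ceq1)
    have k2 : Kq.map (projB f) ≫ Kq.map (X := sgl B) (tmap (0 : B ⟶ ModuleCat.of Λᵐᵒᵖ PUnit) f
        (f ≫ δ + a) 0 hcomm2) = Kq.map (Φ ≫ biprod.snd) := by
      exact (Kq.map_comp _ _).symm.trans keq2
    symm
    exact map_sum_aux Kq _ _ _ _ _ _ _ _ k1 k2 htot
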